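/- If a symmetric matrix A has eigenvalues in the cone Γ_k^+, then its (k−1)-th Newton transformation T_{k-1}(A) is positive definite. -/

import Mathlib

open Finset Matrix

/-- The `k`-th elementary symmetric function of a vector in `ℝⁿ`. -/
noncomputable def esymmVec (n k : ℕ) (x : Fin n → ℝ) : ℝ :=
  ∑ s ∈ Finset.univ.powersetCard k, ∏ i ∈ s, x i

/-- `σ_k(A)`: the `k`-th elementary symmetric function of the eigenvalues of a
symmetric (Hermitian) real matrix `A`. -/
noncomputable def sigmaM (n k : ℕ) (A : Matrix (Fin n) (Fin n) ℝ) : ℝ :=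
  if h : A.IsHermitian then esymmVec n k h.eigenvalues else 0

/-- The `q`-th Newton transformation
`T_q(A) = σ_q(A)·I − σ_{q−1}(A)·A + ⋯ + (−1)^q A^q`. -/
noncomputable def newtonT (n q : ℕ) (A : Matrix (Fin n) (Fin n) ℝ) :
    Matrix (Fin n) (Fin n) ℝ :=
  ∑ j ∈ Finset.range (q + 1), ((-1 : ℝ) ^ j * sigmaM n (q - j) A) • A ^ j

/-- The Gårding cone `Γ_k^+`: the connected component of `{σ_k > 0}` in `ℝⁿ`
containing the positive cone (represented by the point `(1,…,1)`). -/
noncomputable def GammaPlus (n k : ℕ) : Set (Fin n → ℝ) :=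
  connectedComponentIn {x | 0 < esymmVec n k x} (fun _ => 1)

/-- A symmetric matrix lies in `Γ_k^+` if its eigenvalue vector does. -/
def InGammaPlus (n k : ℕ) (A : Matrix (Fin n) (Fin n) ℝ) : Prop :=
  ∃ h : A.IsHermitian, h.eigenvalues ∈ GammaPlus n k

section Aux
open Polynomial

lemma aux_ms_prod_pos (s : Multiset ℝ) (h : ∀ a ∈ s, 0 < a) : 0 < s.prod := by
  induction s using Multiset.induction with
  | empty => simp
  | cons a t ih =>
    rw [Multiset.prod_cons]
    exact mul_pos (h a (Multiset.mem_cons_self a t))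
      (ih fun b hb => h b (Multiset.mem_cons_of_mem hb))

lemma aux_ms_sum_pos (s : Multiset ℝ) (h : ∀ a ∈ s, 0 < a) (hs : s ≠ 0) : 0 < s.sum := by
  induction s using Multiset.induction with
  | empty => simp at hs
  | cons a t ih =>
    rw [Multiset.sum_cons]
    have ht : 0 ≤ t.sum := by
      rcases eq_or_ne t 0 with rfl | ht
      · simp
      · exact (ih (fun b hb => h b (Multiset.mem_cons_of_mem hb)) ht).le
    have := h a (Multiset.mem_cons_self a t)
    linarith

lemma aux_esymm_pos (s : Multiset ℝ) (h : ∀ a ∈ s, 0 < a) {m : ℕ}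
    (hm : m ≤ Multiset.card s) : 0 < s.esymm m := by
  rw [Multiset.esymm]
  apply aux_ms_sum_pos
  · intro a ha
    obtain ⟨t, ht, rfl⟩ := Multiset.mem_map.mp ha
    exact aux_ms_prod_pos t fun b hb =>
      h b (Multiset.mem_of_le (Multiset.mem_powersetCard.mp ht).1 hb)
  · intro h0
    rw [Multiset.map_eq_zero] at h0
    have := Multiset.card_powersetCard m s
    rw [h0, Multiset.card_zero] at this
    exact absurd this.symm (Nat.choose_pos hm).ne'

lemma aux_splits_derivative {p : ℝ[X]} (hp : p.Splits) :
    (derivative p).Splits := by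
  by_cases hd : derivative p = 0
  · rw [hd]; exact Splits.zero
  have hp0 : p ≠ 0 := by rintro rfl; simp at hd
  rw [splits_iff_card_roots] at hp ⊢
  have h1 : Multiset.card p.roots ≤ Multiset.card (derivative p).roots + 1 :=
    p.card_roots_le_derivative
  have h2 : Multiset.card (derivative p).roots ≤ (derivative p).natDegree :=
    (derivative p).card_roots' 
  have h3 : (derivative p).natDegree ≤ p.natDegree - 1 := p.natDegree_derivative_le
  omega

lemma aux_splits_iterate {p : ℝ[X]} (hp : p.Splits) (d : ℕ) :
    (derivative^[d] p).Splits := by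
  induction d with
  | zero => exact hp
  | succ d ih => rw [Function.iterate_succ_apply']; exact aux_splits_derivative ih

lemma aux_sign {P : ℝ[X]} (hs : P.Splits) (hlc : 0 < P.leadingCoeff)
    (hcoeff : ∀ j, 0 ≤ P.coeff j) (h0 : 0 < P.coeff 0) :
    ∀ j ≤ P.natDegree, 0 < P.coeff j := by
  have hP0 : P ≠ 0 := fun h => by simp [h] at hlc
  have hroots : ∀ ρ ∈ P.roots, ρ < 0 := by
    intro ρ hρ
    by_contra hge
    push_neg at hge
    have heval : P.eval ρ = 0 := isRoot_of_mem_roots hρ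
    have hpos : 0 < P.eval ρ := by
      rw [eval_eq_sum_range]
      apply Finset.sum_pos'
      · intro i _
        exact mul_nonneg (hcoeff i) (pow_nonneg hge i)
      · exact ⟨0, Finset.mem_range.mpr (Nat.succ_pos _), by simpa using h0⟩
    linarith
  have hcard : Multiset.card P.roots = P.natDegree := splits_iff_card_roots.mp hs
  have hfac : P = C P.leadingCoeff * (P.roots.map fun a => X - C a).prod :=
    hs.eq_prod_roots
  set ν : Multiset ℝ := P.roots.map Neg.neg with hν
  have hνpos : ∀ b ∈ ν, 0 < b := by
    intro b hb
    obtain ⟨a, ha, rfl⟩ := Multiset.mem_map.mp hb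
    simpa using hroots a ha
  have hcardν : Multiset.card ν = P.natDegree := by rw [hν, Multiset.card_map, hcard]
  have hprod : (P.roots.map fun a => X - C a).prod = (ν.map fun b => X + C b).prod := by
    rw [hν, Multiset.map_map]
    congr 1
    apply Multiset.map_congr rfl
    intro a _
    simp [sub_eq_add_neg]
  intro j hj
  have hcoeffj : P.coeff j = P.leadingCoeff * ν.esymm (Multiset.card ν - j) := by
    conv_lhs => rw [hfac]
    rw [coeff_C_mul, hprod, Multiset.prod_X_add_C_coeff ν (hcardν ▸ hj)]
  rw [hcoeffj]
  exact mul_pos hlc (aux_esymm_pos ν hνpos (Nat.sub_le _ _))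

lemma aux_coeff_iter (p : ℝ[X]) (d m : ℕ) :
    (derivative^[d] p).coeff m = ((m + d).descFactorial d : ℝ) * p.coeff (m + d) := by
  rw [coeff_iterate_derivative, nsmul_eq_mul]

lemma aux_key (p : ℝ[X]) (hmon : p.Monic) (hsp : p.Splits) (d : ℕ)
    (hd : d ≤ p.natDegree) (hnn : ∀ m, d ≤ m → 0 ≤ p.coeff m) (h0 : 0 < p.coeff d) :
    ∀ m, d ≤ m → m ≤ p.natDegree → 0 < p.coeff m := by
  set P : ℝ[X] := derivative^[d] p with hP
  have hfacN : ∀ a b : ℕ, b ≤ a → (0:ℝ) < (a.descFactorial b : ℝ) := by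
    intro a b hba
    have : a.descFactorial b ≠ 0 := fun h =>
      absurd (Nat.descFactorial_eq_zero_iff_lt.mp h) (not_lt.mpr hba)
    exact_mod_cast Nat.pos_of_ne_zero this
  have hfac : ∀ m : ℕ, (0:ℝ) < ((m + d).descFactorial d : ℝ) :=
    fun m => hfacN _ _ (Nat.le_add_left d m)
  have hcoeffP : ∀ m, P.coeff m = ((m + d).descFactorial d : ℝ) * p.coeff (m + d) :=
    fun m => aux_coeff_iter p d m
  have hdegtop : P.coeff (p.natDegree - d) ≠ 0 := by
    rw [hcoeffP, Nat.sub_add_cancel hd, Polynomial.Monic.coeff_natDegree hmon, mul_one]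
    exact ne_of_gt (hfacN _ _ hd)
  have hdegP : P.natDegree = p.natDegree - d := by
    refine le_antisymm (p.natDegree_iterate_derivative d) (le_natDegree_of_ne_zero hdegtop)
  have hlc : 0 < P.leadingCoeff := by
    rw [Polynomial.leadingCoeff, hdegP, hcoeffP, Nat.sub_add_cancel hd,
      Polynomial.Monic.coeff_natDegree hmon]
    simpa using hfacN _ _ hd
  have hc : ∀ j, 0 ≤ P.coeff j := fun j => by
    rw [hcoeffP]
    exact mul_nonneg (hfac j).le (hnn _ (Nat.le_add_left d j))
  have h0' : 0 < P.coeff 0 := by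
    rw [hcoeffP, Nat.zero_add]
    exact mul_pos (hfacN _ _ le_rfl) h0
  have hall := aux_sign (aux_splits_iterate hsp d) hlc hc h0'
  intro m hdm hmtop
  have h1 : m - d ≤ P.natDegree := by omega
  have := hall (m - d) h1
  rw [hcoeffP, Nat.sub_add_cancel hdm] at this
  rcases mul_pos_iff.mp this with ⟨_, h⟩ | ⟨h, _⟩
  · exact h
  · exact absurd h (not_lt.mpr (hfacN _ _ hdm).le)

noncomputable def pune (n j : ℕ) (i : Fin n) (x : Fin n → ℝ) : ℝ :=
  ∑ s ∈ (Finset.univ.erase i).powersetCard j, ∏ l ∈ s, x l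

noncomputable def Qful (n : ℕ) (x : Fin n → ℝ) : ℝ[X] := ∏ i : Fin n, (X + C (x i))

noncomputable def Qpun (n : ℕ) (i : Fin n) (x : Fin n → ℝ) : ℝ[X] :=
  ∏ l ∈ Finset.univ.erase i, (X + C (x l))

lemma aux_Qful_monic (n : ℕ) (x : Fin n → ℝ) : (Qful n x).Monic :=
  monic_prod_of_monic _ _ fun i _ => monic_X_add_C (x i)

lemma aux_Qpun_monic (n : ℕ) (i : Fin n) (x : Fin n → ℝ) : (Qpun n i x).Monic :=
  monic_prod_of_monic _ _ fun l _ => monic_X_add_C (x l)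

lemma aux_Qful_natDegree (n : ℕ) (x : Fin n → ℝ) : (Qful n x).natDegree = n := by
  rw [Qful, natDegree_prod_of_monic _ _ fun i _ => monic_X_add_C (x i)]
  simp [natDegree_X_add_C]

lemma aux_card_erase (n : ℕ) (i : Fin n) : (Finset.univ.erase i).card = n - 1 := by
  rw [Finset.card_erase_of_mem (Finset.mem_univ i), Finset.card_univ, Fintype.card_fin]

lemma aux_Qpun_natDegree (n : ℕ) (i : Fin n) (x : Fin n → ℝ) :
    (Qpun n i x).natDegree = n - 1 := by
  rw [Qpun, natDegree_prod_of_monic _ _ fun l _ => monic_X_add_C (x l)]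
  simp [natDegree_X_add_C, aux_card_erase]

lemma aux_Qful_splits (n : ℕ) (x : Fin n → ℝ) : (Qful n x).Splits :=
  Splits.prod fun i _ => Splits.of_natDegree_le_one (by simp [natDegree_X_add_C])

lemma aux_Qpun_splits (n : ℕ) (i : Fin n) (x : Fin n → ℝ) :
    (Qpun n i x).Splits :=
  Splits.prod fun l _ => Splits.of_natDegree_le_one (by simp [natDegree_X_add_C])

lemma aux_Qful_coeff (n : ℕ) (x : Fin n → ℝ) {j : ℕ} (hj : j ≤ n) :
    (Qful n x).coeff (n - j) = esymmVec n j x := by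
  rw [Qful, esymmVec]
  have hcard : (Finset.univ : Finset (Fin n)).card = n := by
    rw [Finset.card_univ, Fintype.card_fin]
  rw [Finset.prod_X_add_C_coeff _ _ (by omega : n - j ≤ (Finset.univ : Finset (Fin n)).card)]
  congr 1
  rw [hcard]
  congr 1
  omega

lemma aux_Qpun_coeff (n : ℕ) (i : Fin n) (x : Fin n → ℝ) {j : ℕ} (hj : j ≤ n - 1) :
    (Qpun n i x).coeff (n - 1 - j) = pune n j i x := by
  rw [Qpun, pune]
  rw [Finset.prod_X_add_C_coeff _ _ (by rw [aux_card_erase]; omega)]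
  congr 1
  rw [aux_card_erase]
  congr 1
  omega

lemma aux_Qful_eq_mul (n : ℕ) (i : Fin n) (x : Fin n → ℝ) :
    Qful n x = (X + C (x i)) * Qpun n i x := by
  rw [Qful, Qpun]
  exact (Finset.mul_prod_erase Finset.univ (fun l => X + C (x l)) (Finset.mem_univ i)).symm

/-- split identity, for 1 ≤ j ≤ n - 1 -/
lemma aux_split (n : ℕ) (i : Fin n) (x : Fin n → ℝ) {j : ℕ} (hj1 : 1 ≤ j) (hj : j ≤ n - 1) :
    esymmVec n j x = x i * pune n (j - 1) i x + pune n j i x := by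
  have hn : 1 ≤ n := by omega
  have h1 : (Qful n x).coeff (n - j) = (Qpun n i x).coeff (n - j - 1)
      + x i * (Qpun n i x).coeff (n - j) := by
    rw [aux_Qful_eq_mul n i x, add_mul, coeff_add, coeff_C_mul]
    congr 1
    have h2 : n - j = (n - j - 1) + 1 := by omega
    conv_lhs => rw [h2]
    rw [coeff_X_mul]
  rw [aux_Qful_coeff n x (by omega)] at h1
  rw [show n - j - 1 = n - 1 - j by omega, aux_Qpun_coeff n i x hj] at h1
  rw [show n - j = n - 1 - (j - 1) by omega, aux_Qpun_coeff n i x (by omega)] at h1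
  rw [h1]; ring

lemma aux_esymm_zero (n : ℕ) (x : Fin n → ℝ) : esymmVec n 0 x = 1 := by
  simp [esymmVec]

lemma aux_pune_zero (n : ℕ) (i : Fin n) (x : Fin n → ℝ) : pune n 0 i x = 1 := by
  simp [pune]

/-- the eigenvalue identity -/
lemma aux_eigen_id (n : ℕ) (i : Fin n) (x : Fin n → ℝ) {q : ℕ} (hq : q ≤ n - 1) :
    ∑ j ∈ Finset.range (q + 1), (-1 : ℝ) ^ j * esymmVec n (q - j) x * x i ^ j
      = pune n q i x := by
  induction q with
  | zero => simp [aux_esymm_zero, aux_pune_zero]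
  | succ q ih =>
    rw [Finset.sum_range_succ']
    have hstep : ∀ j ∈ Finset.range (q + 1),
        (-1 : ℝ) ^ (j + 1) * esymmVec n (q + 1 - (j + 1)) x * x i ^ (j + 1)
          = -(x i) * ((-1 : ℝ) ^ j * esymmVec n (q - j) x * x i ^ j) := by
      intro j _
      have : q + 1 - (j + 1) = q - j := by omega
      rw [this, pow_succ, pow_succ]
      ring
    rw [Finset.sum_congr rfl hstep, ← Finset.mul_sum, ih (by omega)]
    simp only [pow_zero, one_mul, Nat.sub_zero, mul_one]
    rw [aux_split n i x (by omega) hq]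
    simp only [Nat.add_sub_cancel]
    ring

lemma aux_esymm_top (n : ℕ) (i : Fin n) (x : Fin n → ℝ) :
    esymmVec n n x = x i * pune n (n - 1) i x := by
  rw [esymmVec, pune]
  have hc1 : n = (Finset.univ : Finset (Fin n)).card := by
    rw [Finset.card_univ, Fintype.card_fin]
  have h1 : (Finset.univ : Finset (Fin n)).powersetCard n = {Finset.univ} := by
    ext s
    simp only [Finset.mem_powersetCard, Finset.mem_singleton]
    constructor
    · rintro ⟨-, hs⟩
      exact Finset.eq_univ_of_card s (by rw [hs, Fintype.card_fin])
    · rintro rfl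
      exact ⟨subset_rfl, hc1.symm⟩
  have hc2 : n - 1 = (Finset.univ.erase i).card := (aux_card_erase n i).symm
  have h2 : (Finset.univ.erase i).powersetCard (n - 1) = {Finset.univ.erase i} := by
    ext s
    simp only [Finset.mem_powersetCard, Finset.mem_singleton]
    constructor
    · rintro ⟨hsub, hs⟩
      exact Finset.eq_of_subset_of_card_le hsub (by omega)
    · rintro rfl
      exact ⟨subset_rfl, hc2.symm⟩
  rw [h1, h2, Finset.sum_singleton, Finset.sum_singleton,
    ← Finset.mul_prod_erase Finset.univ _ (Finset.mem_univ i)]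

lemma aux_cont_esymm (n j : ℕ) : Continuous fun x : Fin n → ℝ => esymmVec n j x := by
  unfold esymmVec
  exact continuous_finset_sum _ fun s _ => continuous_finset_prod _ fun l _ => continuous_apply l

lemma aux_cont_pune (n j : ℕ) (i : Fin n) : Continuous fun x : Fin n → ℝ => pune n j i x := by
  unfold pune
  exact continuous_finset_sum _ fun s _ => continuous_finset_prod _ fun l _ => continuous_apply l

lemma aux_esymm_one (n j : ℕ) (hj : j ≤ n) :
    esymmVec n j (fun _ => (1 : ℝ)) = (n.choose j : ℝ) := by
  unfold esymmVec
  simp only [Finset.prod_const_one, Finset.sum_const, nsmul_eq_mul, mul_one]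
  rw [Finset.card_powersetCard, Finset.card_univ, Fintype.card_fin]

lemma aux_pune_one (n j : ℕ) (i : Fin n) (hj : j ≤ n - 1) :
    pune n j i (fun _ => (1 : ℝ)) = ((n - 1).choose j : ℝ) := by
  unfold pune
  simp only [Finset.prod_const_one, Finset.sum_const, nsmul_eq_mul, mul_one]
  rw [Finset.card_powersetCard, Finset.card_erase_of_mem (Finset.mem_univ i),
    Finset.card_univ, Fintype.card_fin]

/-- the clopen set -/
def Gset (n k : ℕ) : Set (Fin n → ℝ) :=
  {y | (∀ j, 1 ≤ j → j ≤ k → 0 < esymmVec n j y) ∧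
    (∀ (i : Fin n) (j : ℕ), 1 ≤ j → j ≤ k - 1 → 0 < pune n j i y)}

lemma aux_Gset_open (n k : ℕ) : IsOpen (Gset n k) := by
  have : Gset n k = (⋂ j ∈ Finset.Icc 1 k, {y : Fin n → ℝ | 0 < esymmVec n j y}) ∩
      (⋂ i : Fin n, ⋂ j ∈ Finset.Icc 1 (k - 1), {y : Fin n → ℝ | 0 < pune n j i y}) := by
    ext y
    simp only [Gset, Set.mem_inter_iff, Set.mem_iInter, Set.mem_setOf_eq, Finset.mem_Icc]
    constructor
    · rintro ⟨h1, h2⟩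
      exact ⟨fun j hj => h1 j hj.1 hj.2, fun i j hj => h2 i j hj.1 hj.2⟩
    · rintro ⟨h1, h2⟩
      exact ⟨fun j hj1 hj2 => h1 j ⟨hj1, hj2⟩, fun i j hj1 hj2 => h2 i j ⟨hj1, hj2⟩⟩
  rw [this]
  refine IsOpen.inter (isOpen_biInter_finset fun j _ => ?_)
    (isOpen_iInter_of_finite fun i => isOpen_biInter_finset fun j _ => ?_)
  · exact isOpen_lt continuous_const (aux_cont_esymm n j)
  · exact isOpen_lt continuous_const (aux_cont_pune n j i)

lemma aux_one_mem_Gset (n k : ℕ) (hkn : k ≤ n) : (fun _ => (1:ℝ)) ∈ Gset n k := by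
  constructor
  · intro j hj1 hj2
    rw [aux_esymm_one n j (by omega)]
    exact_mod_cast Nat.choose_pos (by omega)
  · intro i j hj1 hj2
    rw [aux_pune_one n j i (by omega)]
    exact_mod_cast Nat.choose_pos (by omega)

/-- relative closedness: the analytic core -/
lemma aux_Gset_closed (n k : ℕ) (hk1 : 1 ≤ k) (hkn : k ≤ n) (y : Fin n → ℝ)
    (hy : y ∈ closure (Gset n k)) (hky : 0 < esymmVec n k y) : y ∈ Gset n k := by
  -- nonnegativity from closure
  have h1 : ∀ j, 1 ≤ j → j ≤ k → 0 ≤ esymmVec n j y := by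
    intro j hj1 hj2
    have hcl : closure (Gset n k) ⊆ {z | 0 ≤ esymmVec n j z} :=
      closure_minimal (fun z hz => (hz.1 j hj1 hj2).le)
        (isClosed_le continuous_const (aux_cont_esymm n j))
    exact hcl hy
  have h2 : ∀ (i : Fin n) (j : ℕ), 1 ≤ j → j ≤ k - 1 → 0 ≤ pune n j i y := by
    intro i j hj1 hj2
    have hcl : closure (Gset n k) ⊆ {z | 0 ≤ pune n j i z} :=
      closure_minimal (fun z hz => (hz.2 i j hj1 hj2).le)
        (isClosed_le continuous_const (aux_cont_pune n j i))
    exact hcl hy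
  -- Step 1: all esymm positive
  have hstep1 : ∀ j, j ≤ k → 0 < esymmVec n j y := by
    have hkey := aux_key (Qful n y) (aux_Qful_monic n y) (aux_Qful_splits n y) (n - k)
      (by rw [aux_Qful_natDegree]; omega)
      (fun m hm => by
        rcases le_or_gt m n with hmn | hmn
        · rw [show m = n - (n - m) by omega, aux_Qful_coeff n y (by omega)]
          rcases Nat.eq_zero_or_pos (n - m) with h0 | hpos
          · rw [h0, aux_esymm_zero]; norm_num
          · exact h1 (n - m) hpos (by omega)
        · rw [Polynomial.coeff_eq_zero_of_natDegree_lt (by rw [aux_Qful_natDegree]; omega)])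
      (by rw [aux_Qful_coeff n y hkn]; exact hky)
    intro j hj
    rcases Nat.eq_zero_or_pos j with rfl | hj1
    · rw [aux_esymm_zero]; norm_num
    · have := hkey (n - j) (by omega) (by rw [aux_Qful_natDegree]; omega)
      rwa [aux_Qful_coeff n y (by omega)] at this
  -- Step 2: punctured positivity
  refine ⟨fun j hj1 hj2 => hstep1 j hj2, ?_⟩
  intro i j hj1 hj2
  have hk2 : 2 ≤ k := by omega
  -- helper to conclude from aux_key applied to Qpun with shift d
  have hconc : ∀ d : ℕ, d ≤ n - 1 →
      (∀ m, d ≤ m → 0 ≤ (Qpun n i y).coeff m) → (0 < (Qpun n i y).coeff d) →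
      ∀ j', j' ≤ n - 1 - d → 0 < pune n j' i y := by
    intro d hd hnn h0 j' hj'
    have hkey := aux_key (Qpun n i y) (aux_Qpun_monic n i y) (aux_Qpun_splits n i y) d
      (by rw [aux_Qpun_natDegree]; omega) hnn h0
    have := hkey (n - 1 - j') (by omega) (by rw [aux_Qpun_natDegree]; omega)
    rwa [aux_Qpun_coeff n i y (by omega)] at this
  -- coefficient nonnegativity for Qpun in range corresponding to j' ≤ k - 1
  have hnnQp : ∀ m, n - k ≤ m → 0 ≤ (Qpun n i y).coeff m := by
    intro m hm
    rcases le_or_gt m (n - 1) with hmn | hmn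
    · rw [show m = n - 1 - (n - 1 - m) by omega, aux_Qpun_coeff n i y (by omega)]
      rcases Nat.eq_zero_or_pos (n - 1 - m) with h0 | hpos
      · rw [h0, aux_pune_zero]; norm_num
      · exact h2 i (n - 1 - m) hpos (by omega)
    · rw [Polynomial.coeff_eq_zero_of_natDegree_lt (by rw [aux_Qpun_natDegree]; omega)]
  rcases eq_or_lt_of_le (h2 i (k - 1) (by omega) le_rfl) with hzero | hpos
  · -- pune (k-1) = 0
    rcases eq_or_lt_of_le hkn with rfl | hkln
    · -- k = n : contradiction
      exfalso
      have htop := aux_esymm_top k i y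
      rw [← hzero, mul_zero] at htop
      rw [htop] at hky
      exact lt_irrefl 0 hky
    · -- k < n : pune k > 0, use shift d = n - 1 - k
      have hck : (Qpun n i y).coeff (n - 1 - k) = pune n k i y :=
        aux_Qpun_coeff n i y (j := k) (by omega)
      have hpk : 0 < pune n k i y := by
        have hs := aux_split n i y (j := k) hk1 (by omega)
        rw [← hzero, mul_zero, zero_add] at hs
        rw [← hs]
        exact hstep1 k le_rfl
      refine hconc (n - 1 - k) (by omega) ?_ (by rw [hck]; exact hpk) j (by omega)
      intro m hm
      rcases eq_or_lt_of_le hm with heq | hlt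
      · rw [← heq, hck]
        exact hpk.le
      · exact hnnQp m (by omega)
  · -- pune (k-1) > 0 : use shift d = n - k
    have hck : (Qpun n i y).coeff (n - 1 - (k - 1)) = pune n (k - 1) i y :=
      aux_Qpun_coeff n i y (j := k - 1) (by omega)
    refine hconc (n - k) (by omega) hnnQp ?_ j (by omega)
    rw [show n - k = n - 1 - (k - 1) by omega, hck]
    exact hpos

lemma aux_gamma (n k : ℕ) (hk1 : 1 ≤ k) (hkn : k ≤ n) (x : Fin n → ℝ)
    (hx : x ∈ GammaPlus n k) : ∀ i, 0 < pune n (k - 1) i x := by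
  intro i
  rcases eq_or_lt_of_le hk1 with hk1' | hk2
  · rw [show k - 1 = 0 by omega, aux_pune_zero]
    norm_num
  · have hsub : GammaPlus n k ⊆ Gset n k := by
      have hUopen : IsOpen {y : Fin n → ℝ | 0 < esymmVec n k y} :=
        isOpen_lt continuous_const (aux_cont_esymm n k)
      have h1U : (fun _ => (1:ℝ)) ∈ {y : Fin n → ℝ | 0 < esymmVec n k y} := by
        have : esymmVec n k (fun _ => (1:ℝ)) = (n.choose k : ℝ) := aux_esymm_one n k hkn
        simp only [Set.mem_setOf_eq, this]
        exact_mod_cast Nat.choose_pos hkn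
      have hΓU : GammaPlus n k ⊆ {y : Fin n → ℝ | 0 < esymmVec n k y} :=
        connectedComponentIn_subset _ _
      refine IsPreconnected.subset_left_of_subset_union (v := (closure (Gset n k))ᶜ)
        (aux_Gset_open n k) isClosed_closure.isOpen_compl ?_ ?_ ?_
        isPreconnected_connectedComponentIn
      · exact Set.disjoint_compl_right_iff_subset.mpr subset_closure
      · intro z hz
        by_cases hcl : z ∈ closure (Gset n k)
        · exact Or.inl (aux_Gset_closed n k hk1 hkn z hcl (hΓU hz))
        · exact Or.inr hcl
      · exact ⟨fun _ => (1:ℝ), mem_connectedComponentIn h1U, aux_one_mem_Gset n k hkn⟩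
    exact (hsub hx).2 i (k - 1) (by omega) le_rfl

lemma aux_posdef_conj {n : ℕ} {U M : Matrix (Fin n) (Fin n) ℝ}
    (hU1 : U * star U = 1) (hU2 : star U * U = 1) (hM : M.PosDef) :
    (U * M * star U).PosDef := by
  refine Matrix.PosDef.of_dotProduct_mulVec_pos ?_ ?_
  · have := Matrix.isHermitian_mul_mul_conjTranspose U hM.1
    rwa [← Matrix.star_eq_conjTranspose] at this
  · intro v hv
    have hvU : star U *ᵥ v ≠ 0 := by
      intro h
      apply hv
      have : U *ᵥ (star U *ᵥ v) = v := by
        rw [Matrix.mulVec_mulVec, hU1, Matrix.one_mulVec]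
      rw [h, Matrix.mulVec_zero] at this
      exact this.symm
    have hre := hM.dotProduct_mulVec_pos hvU
    have hsv : star (star U *ᵥ v) = star v ᵥ* U := by
      rw [Matrix.star_mulVec, Matrix.star_eq_conjTranspose, Matrix.conjTranspose_conjTranspose]
    have hexp : star v ⬝ᵥ (U * M * star U) *ᵥ v
        = star (star U *ᵥ v) ⬝ᵥ M *ᵥ (star U *ᵥ v) := by
      rw [← Matrix.mulVec_mulVec, ← Matrix.mulVec_mulVec, Matrix.dotProduct_mulVec (star v), hsv]
    rw [hexp]
    exact hre


end Aux

/-- If a symmetric matrix `A` has eigenvalues in `Γ_k^+`, then the Newton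
transformation `T_{k-1}(A)` is positive definite. -/

theorem newton_posDef (n k : ℕ) (hk1 : 1 ≤ k) (hkn : k ≤ n)
    (A : Matrix (Fin n) (Fin n) ℝ) (hA : InGammaPlus n k A) :
    (newtonT n (k - 1) A).PosDef := by
  obtain ⟨hH, hmem⟩ := hA
  set x : Fin n → ℝ := hH.eigenvalues with hxdef
  have key : ∀ i, 0 < pune n (k - 1) i x := aux_gamma n k hk1 hkn x hmem
  set U : Matrix (Fin n) (Fin n) ℝ := (Matrix.IsHermitian.eigenvectorUnitary hH : Matrix (Fin n) (Fin n) ℝ) with hUdef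
  have hU1 : U * star U = 1 :=
    Matrix.mem_unitaryGroup_iff.mp (Matrix.IsHermitian.eigenvectorUnitary hH).2
  have hU2 : star U * U = 1 :=
    Matrix.mem_unitaryGroup_iff'.mp (Matrix.IsHermitian.eigenvectorUnitary hH).2
  have hspec : A = U * Matrix.diagonal x * star U := by
    have := hH.spectral_theorem
    simpa using this
  have hpow : ∀ j : ℕ, A ^ j = U * Matrix.diagonal (fun i => x i ^ j) * star U := by
    intro j
    induction j with
    | zero =>
      simp only [pow_zero]
      rw [Matrix.diagonal_one, Matrix.mul_one, hU1]
    | succ j ih =>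
      rw [pow_succ, ih, hspec]
      have : (fun i => x i ^ (j+1)) = fun i => x i ^ j * x i := by
        funext i; rw [pow_succ]
      rw [this, ← Matrix.diagonal_mul_diagonal]
      simp only [Matrix.mul_assoc]
      rw [← Matrix.mul_assoc (star U) U, hU2, Matrix.one_mul]
  have hsig : ∀ m, sigmaM n m A = esymmVec n m x := by
    intro m
    rw [sigmaM, dif_pos hH]
  have hNew : newtonT n (k - 1) A = U * Matrix.diagonal (fun i => pune n (k-1) i x) * star U := by
    rw [newtonT]
    have hdiag : ∀ i, pune n (k-1) i x
        = ∑ j ∈ Finset.range ((k-1) + 1), ((-1:ℝ)) ^ j * esymmVec n (k - 1 - j) x * x i ^ j :=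
      fun i => (aux_eigen_id n i x (by omega)).symm
    calc ∑ j ∈ Finset.range ((k-1) + 1), ((-1 : ℝ) ^ j * sigmaM n (k - 1 - j) A) • A ^ j
        = ∑ j ∈ Finset.range ((k-1) + 1),
            U * (((-1 : ℝ) ^ j * esymmVec n (k - 1 - j) x) • Matrix.diagonal (fun i => x i ^ j)) * star U := by
          refine Finset.sum_congr rfl fun j _ => ?_
          rw [hsig, hpow j, Matrix.mul_smul, Matrix.smul_mul]
      _ = U * (∑ j ∈ Finset.range ((k-1) + 1),
            ((-1 : ℝ) ^ j * esymmVec n (k - 1 - j) x) • Matrix.diagonal (fun i => x i ^ j)) * star U := by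
          rw [← Finset.sum_mul, ← Finset.mul_sum]
      _ = U * Matrix.diagonal (fun i => pune n (k-1) i x) * star U := by
          congr 1
          congr 1
          rw [show (fun i => pune n (k-1) i x)
            = fun i => ∑ j ∈ Finset.range ((k-1) + 1),
                ((-1:ℝ)) ^ j * esymmVec n (k - 1 - j) x * x i ^ j from funext hdiag]
          ext a b
          by_cases hab : a = b
          · subst hab
            simp [Matrix.sum_apply, Matrix.diagonal_apply, Matrix.smul_apply]
          · simp [Matrix.sum_apply, Matrix.diagonal_apply_ne _ hab, Matrix.smul_apply]
  rw [hNew]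
  exact aux_posdef_conj hU1 hU2 (Matrix.PosDef.diagonal key)
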